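/- Every interior cell of a matroid subdivision of the hypersimplex Δ(k,n) has dimension at least n − k; equivalently, the tight-span of a matroid subdivision of Δ(k,n) is at most (k−1)-dimensional. -/

import Mathlib

open scoped Classical

section Subdivision

variable {E : Type*} [AddCommGroup E] [Module ℝ E]

/-- A polytope: the convex hull of a finite set of points. -/
def IsPolytope (P : Set E) : Prop := ∃ s : Finset E, P = convexHull ℝ (s : Set E)

/-- `F` is a face of `C`: a convex extreme subset. -/
def IsFaceOf (F C : Set E) : Prop := IsExtreme ℝ C F ∧ Convex ℝ F

/-- A polytopal subdivision of a polytope `P`: a finite collection of nonempty polytopes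
(cells), closed under taking (nonempty) faces, covering `P`, such that any two cells meet
in a common (possibly empty) face, and such that all vertices of cells are vertices of `P`. -/
structure IsSubdivision (P : Set E) (S : Set (Set E)) : Prop where
  finite : S.Finite
  nonempty_cell : ∀ C ∈ S, C.Nonempty
  poly : ∀ C ∈ S, IsPolytope C
  face_closed : ∀ C ∈ S, ∀ F, IsFaceOf F C → F.Nonempty → F ∈ S
  cover : ⋃₀ S = P
  inter_face : ∀ C ∈ S, ∀ D ∈ S, IsFaceOf (C ∩ D) C
  vertices : ∀ C ∈ S, ∀ x ∈ Set.extremePoints ℝ C, x ∈ Set.extremePoints ℝ P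

/-- A maximal cell of a collection of cells. -/
def MaximalCell (S : Set (Set E)) (C : Set E) : Prop :=
  C ∈ S ∧ ∀ D ∈ S, C ⊆ D → D = C

/-- The (relative) boundary of a polytope: the union of its proper faces. -/
def relBoundary (P : Set E) : Set E := ⋃₀ {F | IsFaceOf F P ∧ F ≠ P}

/-- The restriction `Σ|_{P'} = {S ∩ P' : S ∈ Σ}` of a subdivision to a subpolytope. -/
def restrictSubdiv (S : Set (Set E)) (P' : Set E) : Set (Set E) := (fun C => C ∩ P') '' S

/-- `P'` is a subpolytope of `P`: the convex hull of a subset of the vertices of `P`. -/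
def IsSubpolytope (P' P : Set E) : Prop :=
  ∃ W : Set E, W ⊆ Set.extremePoints ℝ P ∧ P' = convexHull ℝ W

/-- The tight-spans of `(P, S)` and `(P', S')` are isomorphic as posets: there is a
bijection between the interior cells (those not contained in the boundary) which is an
isomorphism for the partial order by reverse inclusion. -/
def TightSpanIso (P : Set E) (S : Set (Set E)) (P' : Set E) (S' : Set (Set E)) : Prop :=
  ∃ e : {C : Set E // C ∈ S ∧ ¬ C ⊆ relBoundary P} ≃
        {C : Set E // C ∈ S' ∧ ¬ C ⊆ relBoundary P'},
    ∀ C D, C.1 ⊆ D.1 ↔ (e C).1 ⊆ (e D).1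

/-- `S'` coarsens `S`: every cell of `S` is contained in some cell of `S'`. -/
def Coarsens (S S' : Set (Set E)) : Prop := ∀ C ∈ S, ∃ D ∈ S', C ⊆ D

/-- The trivial subdivision of a polytope: its collection of nonempty faces. -/
def trivialSubdiv (P : Set E) : Set (Set E) := {F | IsFaceOf F P ∧ F.Nonempty}

/-- A coarsest (non-trivial) subdivision: a non-trivial subdivision whose only proper
coarsening is the trivial subdivision. -/
def IsCoarsest (P : Set E) (S : Set (Set E)) : Prop :=
  IsSubdivision P S ∧ S ≠ trivialSubdiv P ∧
    ∀ S', IsSubdivision P S' → Coarsens S S' → S' ≠ S → S' = trivialSubdiv P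

end Subdivision

/-- The 0/1 indicator vector of a subset of `[n]`. -/
noncomputable def indicatorVec {n : ℕ} (B : Set (Fin n)) : Fin n → ℝ :=
  fun i => if i ∈ B then 1 else 0

/-- The hypersimplex `Δ(k,n)`. -/
noncomputable def hypersimplex (k n : ℕ) : Set (Fin n → ℝ) :=
  convexHull ℝ {x | ∃ σ : Finset (Fin n), σ.card = k ∧ x = indicatorVec (↑σ : Set (Fin n))}

/-- `C` is the matroid polytope of a rank-`k` matroid on `[n]`. -/
def IsMatroidPolytope (k n : ℕ) (C : Set (Fin n → ℝ)) : Prop :=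
  ∃ M : Matroid (Fin n), M.E = Set.univ ∧ (∀ b, M.IsBase b → b.ncard = k) ∧
    C = convexHull ℝ {x | ∃ b, M.IsBase b ∧ x = indicatorVec b}

section Helpers

variable {k n : ℕ}

lemma indicator_mem_hypersimplex {b : Set (Fin n)} (hb : b.ncard = k) :
    indicatorVec b ∈ hypersimplex k n := by
  apply subset_convexHull
  refine ⟨b.toFinset, ?_, by simp⟩
  rw [← Set.ncard_eq_toFinset_card']; exact hb

lemma hypersimplex_nonneg (e : Fin n) :
    hypersimplex k n ⊆ {x | 0 ≤ x e} := by
  apply convexHull_min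
  · rintro x ⟨σ, hσ, rfl⟩
    simp only [Set.mem_setOf_eq, indicatorVec]
    split <;> norm_num
  · exact convex_halfSpace_ge (IsLinearMap.mk (fun x y => rfl) (fun c x => rfl)) 0

lemma face_coord_zero (hk : 0 < k) (hkn : k < n) (e : Fin n) :
    IsFaceOf (hypersimplex k n ∩ {x | x e = 0}) (hypersimplex k n) ∧
      hypersimplex k n ∩ {x | x e = 0} ≠ hypersimplex k n := by
  have hnn := hypersimplex_nonneg (k := k) e
  constructor
  · constructor
    · constructor
      · exact Set.inter_subset_left
      · rintro x₁ hx₁ x₂ hx₂ x ⟨hxΔ, hx0⟩ hseg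
        obtain ⟨a, b, ha, hb, hab, hx⟩ := hseg
        have h1 : 0 ≤ x₁ e := hnn hx₁
        have h2 : 0 ≤ x₂ e := hnn hx₂
        have hx0' : a * x₁ e + b * x₂ e = 0 := by
          have h := congrFun hx e
          simp only [Pi.add_apply, Pi.smul_apply, smul_eq_mul] at h
          rw [h]; exact hx0
        have e1 : x₁ e = 0 := by nlinarith
        have e2 : x₂ e = 0 := by nlinarith
        exact Set.mem_inter hx₁ e1
    · exact (convex_convexHull ℝ _).inter
        (convex_hyperplane (IsLinearMap.mk (fun x y => rfl) (fun c x => rfl)) 0)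
  · -- there is a vertex with e-coordinate 1
    intro hEq
    obtain ⟨τ, hτsub, hτcard⟩ : ∃ τ ⊆ (Finset.univ.erase e), τ.card = k - 1 := by
      apply Finset.exists_subset_card_eq
      rw [Finset.card_erase_of_mem (Finset.mem_univ e), Finset.card_univ, Fintype.card_fin]
      omega
    have heτ : e ∉ τ := fun h => (Finset.mem_erase.mp (hτsub h)).1 rfl
    set σ := insert e τ with hσ
    have hσcard : σ.card = k := by
      rw [hσ, Finset.card_insert_of_notMem heτ, hτcard]; omega
    have hmem : indicatorVec (↑σ : Set (Fin n)) ∈ hypersimplex k n := by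
      apply subset_convexHull
      exact ⟨σ, hσcard, rfl⟩
    rw [← hEq] at hmem
    have : indicatorVec (↑σ : Set (Fin n)) e = 0 := hmem.2
    simp [indicatorVec, hσ] at this

end Helpers

/-- Every interior cell of a matroid subdivision of `Δ(k,n)` has dimension at least
`n − k`; equivalently, the tight-span of a matroid subdivision of `Δ(k,n)` is at most
`(k−1)`-dimensional. -/
theorem interior_cell_dim_ge (k n : ℕ) (hk : 0 < k) (hkn : k < n)
    (S : Set (Set (Fin n → ℝ))) (hS : IsSubdivision (hypersimplex k n) S)
    (hmat : ∀ C ∈ S, IsMatroidPolytope k n C) :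
    ∀ C ∈ S, ¬ C ⊆ relBoundary (hypersimplex k n) →
      n - k ≤ Module.finrank ℝ (vectorSpan ℝ C) := by
  intro C hC hCb
  obtain ⟨M, hE, hrank, hCeq⟩ := hmat C hC
  -- M is loop-free: every element lies in some base
  have hloopfree : ∀ e : Fin n, ∃ b, M.IsBase b ∧ e ∈ b := by
    intro e
    by_contra h
    push_neg at h
    apply hCb
    obtain ⟨hface, hne⟩ := face_coord_zero hk hkn e
    have hsub : C ⊆ hypersimplex k n ∩ {x | x e = 0} := by
      rw [hCeq]
      apply convexHull_min
      · rintro x ⟨b, hb, rfl⟩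
        exact ⟨indicator_mem_hypersimplex (hrank b hb),
          by simp [indicatorVec, h b hb]⟩
      · exact hface.2
    exact hsub.trans (Set.subset_sUnion_of_mem ⟨hface, hne⟩)
  obtain ⟨B₀, hB₀⟩ := M.exists_isBase
  letI : Fintype {e : Fin n // e ∉ B₀} := Fintype.ofFinite _
  -- for each e ∉ B₀, a base containing e and contained in insert e B₀
  have key : ∀ e : {e : Fin n // e ∉ B₀}, ∃ B', M.IsBase B' ∧ e.1 ∈ B' ∧ B' ⊆ insert e.1 B₀ := by
    intro e
    obtain ⟨b, hb, heb⟩ := hloopfree e.1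
    have hindep : M.Indep {e.1} := hb.indep.subset (by simpa)
    obtain ⟨B', hB', hsub1, hsub2⟩ := hindep.exists_isBase_subset_union_isBase hB₀
    exact ⟨B', hB', hsub1 rfl, by simpa [Set.singleton_union] using hsub2⟩
  choose B hB1 hB2 hB3 using key
  set w : {e : Fin n // e ∉ B₀} → (Fin n → ℝ) := fun e => indicatorVec (B e) - indicatorVec B₀ with hw
  -- membership in the vector span
  have hptC : ∀ b, M.IsBase b → indicatorVec b ∈ C := by
    intro b hb
    rw [hCeq]
    exact subset_convexHull ℝ _ ⟨b, hb, rfl⟩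
  have hw_mem : ∀ e, w e ∈ vectorSpan ℝ C := by
    intro e
    have := vsub_mem_vectorSpan ℝ (hptC _ (hB1 e)) (hptC _ hB₀)
    simpa [hw, vsub_eq_sub] using this
  -- linear independence
  have hli : LinearIndependent ℝ w := by
    apply LinearIndependent.of_comp (LinearMap.funLeft ℝ ℝ (fun e : {e : Fin n // e ∉ B₀} => e.1))
    have hcomp : (LinearMap.funLeft ℝ ℝ (fun e : {e : Fin n // e ∉ B₀} => e.1)) ∘ w =
        fun (e e' : {e : Fin n // e ∉ B₀}) => if e' = e then (1:ℝ) else 0 := by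
      funext e e'
      simp only [Function.comp_apply, LinearMap.funLeft_apply, hw, Pi.sub_apply, indicatorVec]
      have h0 : e'.1 ∉ B₀ := e'.2
      have hBe : e'.1 ∈ B e ↔ e' = e := by
        constructor
        · intro h
          rcases (hB3 e) h with h1 | h1
          · exact Subtype.ext h1
          · exact absurd h1 h0
        · rintro rfl; exact hB2 e'
      rw [if_neg h0, sub_zero]
      by_cases h : e' = e
      · rw [if_pos (hBe.mpr h), if_pos h]
      · rw [if_neg (fun hh => h (hBe.mp hh)), if_neg h]
    rw [hcomp]
    have h := (Pi.basisFun ℝ {e : Fin n // e ∉ B₀}).linearIndependent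
    convert h using 1
    funext e e'
    simp [Pi.basisFun_apply, Pi.single_apply]
  -- lift to the submodule
  set p := vectorSpan ℝ C
  set w' : {e : Fin n // e ∉ B₀} → p := fun e => ⟨w e, hw_mem e⟩ with hw'
  have hli' : LinearIndependent ℝ w' := by
    apply LinearIndependent.of_comp p.subtype
    exact hli
  have hcard : Fintype.card {e : Fin n // e ∉ B₀} = n - k := by
    have h1 : Fintype.card {e : Fin n // e ∈ B₀} = k := by
      rw [← hrank B₀ hB₀, Set.ncard_eq_toFinset_card' B₀, Set.toFinset_card]
    rw [Fintype.card_subtype_compl, h1, Fintype.card_fin]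
  calc n - k = Fintype.card {e : Fin n // e ∉ B₀} := hcard.symm
    _ ≤ Module.finrank ℝ p := hli'.fintype_card_le_finrank
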